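/- Every nonnegative integer flow x' on a finite directed acyclic graph with integer node balances b (sources and sinks) decomposes into a finite multiset of directed paths from deficit nodes to surplus nodes: there exist paths p_1,…,p_k such that for every arc a, the number of paths using a equals x'_a, and each node's net path balance equals b_v. -/

import Mathlib

noncomputable def buildPath {V A : Type*} [Fintype V] [Fintype A] [DecidableEq V]
    (tail head : A → V) (ord : V → ℕ)
    (hacyc : ∀ a : A, ord (tail a) < ord (head a)) (x : A → ℕ) (v : V) : List A :=
  if h : ∃ a, tail a = v ∧ 0 < x a then
    h.choose :: buildPath tail head ord hacyc x (head h.choose)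
  else []
termination_by (Finset.univ.filter (fun w => ord v < ord w)).card
decreasing_by
  have h1 : ord v < ord (head h.choose) := by
    have h3 := hacyc h.choose
    rw [h.choose_spec.1] at h3
    exact h3
  apply Finset.card_lt_card
  rw [Finset.ssubset_iff_of_subset]
  · exact ⟨head h.choose, by simp [h1], by simp⟩
  · intro w hw
    simp at hw ⊢
    omega

section
variable {V A : Type*} [Fintype V] [Fintype A] [DecidableEq V]
    (tail head : A → V) (ord : V → ℕ)
    (hacyc : ∀ a : A, ord (tail a) < ord (head a)) (x : A → ℕ)

theorem bp_pos (v : V) : ∀ a ∈ buildPath tail head ord hacyc x v, 0 < x a := by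
  induction v using buildPath.induct tail head ord hacyc x with
  | case1 v h ih =>
    rw [buildPath, dif_pos h]
    intro a ha
    rcases List.mem_cons.mp ha with rfl | ha
    · exact h.choose_spec.2
    · exact ih a ha
  | case2 v h => rw [buildPath, dif_neg h]; simp

theorem bp_head (v : V) : ∀ a ∈ (buildPath tail head ord hacyc x v).head?, tail a = v := by
  by_cases h : ∃ a, tail a = v ∧ 0 < x a
  · rw [buildPath, dif_pos h]
    intro a ha
    simp at ha
    subst ha
    exact h.choose_spec.1
  · rw [buildPath, dif_neg h]; simp

theorem bp_nonempty (v : V) (h : ∃ a, tail a = v ∧ 0 < x a) :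
    buildPath tail head ord hacyc x v ≠ [] := by
  rw [buildPath, dif_pos h]; simp

theorem bp_chain (v : V) :
    List.Chain' (fun a a' => head a = tail a') (buildPath tail head ord hacyc x v) := by
  induction v using buildPath.induct tail head ord hacyc x with
  | case1 v h ih =>
    rw [buildPath, dif_pos h]
    show List.IsChain _ _
    rw [List.isChain_cons]
    refine ⟨fun a' ha' => (bp_head tail head ord hacyc x _ a' ha').symm, ih⟩
  | case2 v h => rw [buildPath, dif_neg h]; exact List.isChain_nil

theorem bp_ord (v : V) : ∀ a ∈ buildPath tail head ord hacyc x v, ord v ≤ ord (tail a) := by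
  induction v using buildPath.induct tail head ord hacyc x with
  | case1 v h ih =>
    rw [buildPath, dif_pos h]
    intro a ha
    rcases List.mem_cons.mp ha with rfl | ha
    · rw [h.choose_spec.1]
    · have h1 := ih a ha
      have h2 := hacyc h.choose
      rw [h.choose_spec.1] at h2
      omega
  | case2 v h => rw [buildPath, dif_neg h]; simp

theorem bp_nodup (v : V) : (buildPath tail head ord hacyc x v).Nodup := by
  induction v using buildPath.induct tail head ord hacyc x with
  | case1 v h ih =>
    rw [buildPath, dif_pos h]
    refine List.nodup_cons.mpr ⟨fun hmem => ?_, ih⟩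
    have h1 := bp_ord tail head ord hacyc x (head h.choose) _ hmem
    have h2 := hacyc h.choose
    omega
  | case2 v h => rw [buildPath, dif_neg h]; simp
end

theorem sum_count_filter {A : Type*} [Fintype A] [DecidableEq A]
    (l : List A) (p : A → Prop) [DecidablePred p] :
    ∑ a ∈ Finset.univ.filter (fun a => p a), l.count a = l.countP (fun a => decide (p a)) := by
  induction l with
  | nil => simp
  | cons a l ih =>
    simp only [List.count_cons, List.countP_cons, Finset.sum_add_distrib, ih]
    congr 1
    by_cases hp : p a
    · rw [Finset.sum_eq_single a]
      · simp [hp]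
      · intro b _ hb; simp [Ne.symm hb]
      · intro h; simp [hp] at h
    · rw [Finset.sum_eq_zero]
      · simp [hp]
      · intro b hb
        simp only [Finset.mem_filter] at hb
        have : a ≠ b := fun h => hp (h ▸ hb.2)
        simp [this]

theorem chain_telescope {V A : Type*} (tail head : A → V) (v : V) [DecidableEq V] :
    ∀ (l : List A) (h : l ≠ []), List.Chain' (fun a a' => head a = tail a') l →
    ((l.countP (fun a => decide (tail a = v)) : ℤ) - l.countP (fun a => decide (head a = v)))
      = (if tail (l.head h) = v then 1 else 0) - (if head (l.getLast h) = v then 1 else 0) := by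
  intro l
  induction l with
  | nil => intro h; exact absurd rfl h
  | cons a t ih =>
    intro h hc
    cases t with
    | nil => simp [List.countP_cons]; split_ifs <;> simp_all
    | cons a' r =>
      unfold List.Chain' at hc
      rw [List.isChain_cons_cons] at hc
      have hr := ih (List.cons_ne_nil a' r) hc.2
      simp only [List.countP_cons, List.head_cons,
        List.getLast_cons (List.cons_ne_nil a' r)] at hr ⊢
      simp only [hc.1] at hr ⊢
      push_cast at hr ⊢
      simp only [decide_eq_true_eq] at hr ⊢
      split_ifs at hr ⊢ <;> simp_all <;> omega

theorem integer_flow_path_decomposition_aux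
    {V A : Type*} [Fintype V] [Fintype A] [DecidableEq A] [DecidableEq V]
    (tail head : A → V)
    (ord : V → ℕ) (hacyc : ∀ a : A, ord (tail a) < ord (head a)) :
    ∀ (n : ℕ) (x : A → ℕ) (b : V → ℤ),
    (∀ v : V,
      (∑ a ∈ Finset.univ.filter (fun a => tail a = v), (x a : ℤ))
        - (∑ a ∈ Finset.univ.filter (fun a => head a = v), (x a : ℤ)) = b v) →
    (∑ a, x a) = n →
    ∃ (k : ℕ) (p : Fin k → {l : List A // l ≠ []}),
      (∀ i, List.Chain' (fun a a' => head a = tail a') (p i).1) ∧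
      (∀ a : A, (∑ i, (p i).1.count a) = x a) ∧
      (∀ v : V,
        (∑ i, (if tail ((p i).1.head (p i).2) = v then (1 : ℤ) else 0))
          - (∑ i, (if head ((p i).1.getLast (p i).2) = v then (1 : ℤ) else 0))
          = b v) := by
  intro n
  induction n using Nat.strong_induction_on with
  | _ n ih =>
    intro x b hcons hsum
    by_cases hz : ∀ a, x a = 0
    · refine ⟨0, Fin.elim0, fun i => i.elim0, fun a => by simp [hz a], fun v => ?_⟩
      have := hcons v
      simp [hz] at this ⊢
      omega
    · push_neg at hz
      obtain ⟨a0, ha0⟩ := hz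
      have hex : ∃ a, tail a = tail a0 ∧ 0 < x a := ⟨a0, rfl, Nat.pos_of_ne_zero ha0⟩
      set l := buildPath tail head ord hacyc x (tail a0) with hl
      have hne : l ≠ [] := bp_nonempty tail head ord hacyc x _ hex
      have hchain : List.Chain' (fun a a' => head a = tail a') l :=
        bp_chain tail head ord hacyc x _
      have hnodup : l.Nodup := bp_nodup tail head ord hacyc x _
      have hpos : ∀ a ∈ l, 0 < x a := bp_pos tail head ord hacyc x _
      have hcount : ∀ a, l.count a ≤ x a := by
        intro a
        by_cases hm : a ∈ l
        · rw [List.count_eq_one_of_mem hnodup hm]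
          exact hpos a hm
        · rw [List.count_eq_zero_of_not_mem hm]
          exact Nat.zero_le _
      set x' : A → ℕ := fun a => x a - l.count a with hx'
      set b' : V → ℤ := fun v => b v - (if tail (l.head hne) = v then 1 else 0)
          + (if head (l.getLast hne) = v then 1 else 0) with hb'
      have key : ∀ v : V,
          (∑ a ∈ Finset.univ.filter (fun a => tail a = v), (l.count a : ℤ))
            - (∑ a ∈ Finset.univ.filter (fun a => head a = v), (l.count a : ℤ))
          = (if tail (l.head hne) = v then 1 else 0)
            - (if head (l.getLast hne) = v then 1 else 0) := by
        intro v
        have h1 := sum_count_filter l (fun a => tail a = v)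
        have h2 := sum_count_filter l (fun a => head a = v)
        have h3 := chain_telescope tail head v l hne hchain
        have h1' : (∑ a ∈ Finset.univ.filter (fun a => tail a = v), (l.count a : ℤ))
            = (l.countP (fun a => decide (tail a = v)) : ℤ) := by exact_mod_cast h1
        have h2' : (∑ a ∈ Finset.univ.filter (fun a => head a = v), (l.count a : ℤ))
            = (l.countP (fun a => decide (head a = v)) : ℤ) := by exact_mod_cast h2
        rw [h1', h2', h3]
      have hconsx' : ∀ v : V,
          (∑ a ∈ Finset.univ.filter (fun a => tail a = v), (x' a : ℤ))
            - (∑ a ∈ Finset.univ.filter (fun a => head a = v), (x' a : ℤ)) = b' v := by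
        intro v
        have hc1 : ∀ a : A, ((x' a : ℤ)) = (x a : ℤ) - (l.count a : ℤ) := by
          intro a
          simp only [hx']
          exact_mod_cast Nat.cast_sub (hcount a)
        simp only [hc1, Finset.sum_sub_distrib]
        have k1 := key v
        have k2 := hcons v
        simp only [hb']
        linarith
      have hsum' : ∑ a, x' a < n := by
        rw [← hsum]
        apply Finset.sum_lt_sum (fun a _ => Nat.sub_le _ _)
        refine ⟨l.head hne, Finset.mem_univ _, ?_⟩
        have hmem : l.head hne ∈ l := List.head_mem hne
        have hp1 := hpos _ hmem
        have hp2 : 0 < l.count (l.head hne) := List.count_pos_iff.mpr hmem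
        show x (l.head hne) - l.count (l.head hne) < x (l.head hne)
        omega
      obtain ⟨k, q, hq1, hq2, hq3⟩ := ih _ hsum' x' b' hconsx' rfl
      refine ⟨k + 1, Fin.cons ⟨l, hne⟩ q, ?_, ?_, ?_⟩
      · intro i
        exact Fin.cases hchain hq1 i
      · intro a
        rw [Fin.sum_univ_succ]
        simp only [Fin.cons_zero, Fin.cons_succ]
        rw [hq2 a]
        show List.count a l + x' a = x a
        have h1 : x' a = x a - l.count a := rfl
        have h2 := hcount a
        omega
      · intro v
        rw [Fin.sum_univ_succ, Fin.sum_univ_succ]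
        simp only [Fin.cons_zero, Fin.cons_succ]
        have h3 := hq3 v
        simp only [hb'] at h3
        show (if tail (l.head hne) = v then (1:ℤ) else 0)
            + (∑ i : Fin k, if tail ((q i).1.head (q i).2) = v then (1:ℤ) else 0)
          - ((if head (l.getLast hne) = v then (1:ℤ) else 0)
            + ∑ i : Fin k, if head ((q i).1.getLast (q i).2) = v then (1:ℤ) else 0) = b v
        linarith



/-!
STATEMENT 1: Every nonnegative integer flow on a finite DAG with integer node
balances decomposes into finitely many directed paths from deficit to surplus
nodes: the number of paths using each arc equals the flow value, and each
node's net path balance equals its balance.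
-/

theorem integer_flow_path_decomposition
    {V A : Type*} [Fintype V] [Fintype A] [DecidableEq A] [DecidableEq V]
    (tail head : A → V)
    -- acyclicity: arcs go forward w.r.t. a (topological / time) order
    (ord : V → ℕ) (hacyc : ∀ a : A, ord (tail a) < ord (head a))
    (x : A → ℕ) (b : V → ℤ)
    -- flow conservation with balances b
    (hcons : ∀ v : V,
      (∑ a ∈ Finset.univ.filter (fun a => tail a = v), (x a : ℤ))
        - (∑ a ∈ Finset.univ.filter (fun a => head a = v), (x a : ℤ)) = b v) :
    ∃ (k : ℕ) (p : Fin k → {l : List A // l ≠ []}),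
      -- each p i is a directed path
      (∀ i, List.Chain' (fun a a' => head a = tail a') (p i).1) ∧
      -- the number of paths using arc a equals the flow on a
      (∀ a : A, (∑ i, (p i).1.count a) = x a) ∧
      -- net path balance at each node equals b v
      (∀ v : V,
        (∑ i, (if tail ((p i).1.head (p i).2) = v then (1 : ℤ) else 0))
          - (∑ i, (if head ((p i).1.getLast (p i).2) = v then (1 : ℤ) else 0))
          = b v) := by
  exact integer_flow_path_decomposition_aux tail head ord hacyc (∑ a, x a) x b hcons rfl
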